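/- For x ∈ ℝ, let ν(x) be the upper triangular n×n matrix with diagonal entries 1 and entries ν(x)_{jk} = (1 − e^{−x}) e^{(k−j)x/2} for j < k (and 0 below the diagonal). Then ν(−x) = ν(x)^{-1}. -/

import Mathlib

open Matrix

/-- The unipotent upper triangular matrix ν(x). -/
noncomputable def nuRS (n : ℕ) (x : ℝ) : Matrix (Fin n) (Fin n) ℝ :=
  Matrix.of fun j k =>
    if j = k then 1
    else if j < k then (1 - Real.exp (-x)) * Real.exp ((((k : ℕ) : ℝ) - ((j : ℕ) : ℝ)) * x / 2)
    else 0

open Matrix Finset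

/-- ℕ-indexed entry function. -/
noncomputable def gRS (x : ℝ) (j k : ℕ) : ℝ :=
  if j = k then 1
  else if j < k then (1 - Real.exp (-x)) * Real.exp (((k : ℝ) - (j : ℝ)) * x / 2)
  else 0

lemma gRS_of_lt {j k : ℕ} (h : k < j) (x : ℝ) : gRS x j k = 0 := by
  simp [gRS, Nat.ne_of_gt h, not_lt.mpr h.le, h.not_gt]

lemma key_id (x t : ℝ) (hx : Real.exp x ≠ 1) :
    (1 - Real.exp x) * Real.exp (-((t+1)*x)/2) + (1 - Real.exp (-x)) * Real.exp ((t+1)*x/2)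
    + (1 - Real.exp (-x)) * (1 - Real.exp x) * Real.exp ((1-t)*x/2) *
      ((Real.exp (t*x) - 1)/(Real.exp x - 1)) = 0 := by
  have ha : Real.exp (x/2) ≠ 0 := Real.exp_ne_zero _
  have hb : Real.exp (t*x/2) ≠ 0 := Real.exp_ne_zero _
  have h1 : Real.exp x = Real.exp (x/2) * Real.exp (x/2) := by
    rw [← Real.exp_add]; congr 1; ring
  have h2 : Real.exp (t*x) = Real.exp (t*x/2) * Real.exp (t*x/2) := by
    rw [← Real.exp_add]; congr 1; ring
  have h3 : Real.exp ((t+1)*x/2) = Real.exp (x/2) * Real.exp (t*x/2) := by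
    rw [← Real.exp_add]; congr 1; ring
  have h4 : Real.exp (-((t+1)*x)/2) = (Real.exp (x/2) * Real.exp (t*x/2))⁻¹ := by
    rw [← h3, ← Real.exp_neg]; congr 1; ring
  have h6 : Real.exp (-x) = (Real.exp x)⁻¹ := Real.exp_neg x
  have h5 : Real.exp ((1-t)*x/2) = Real.exp (x/2) * (Real.exp (t*x/2))⁻¹ := by
    rw [← Real.exp_neg, ← Real.exp_add]; congr 1; ring
  have hsub : Real.exp (x/2) * Real.exp (x/2) - 1 ≠ 0 := by
    rw [← h1]; exact sub_ne_zero.mpr hx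
  rw [h6, h2, h3, h4, h5, h1]
  have hsub2 : Real.exp (x/2) ^ 2 - 1 ≠ 0 := by rw [sq]; exact hsub
  field_simp
  ring

lemma gRS_sum (x : ℝ) (hx : x ≠ 0) (n jv kv : ℕ) (hj : jv < n) (hk : kv < n) :
    ∑ m ∈ Finset.range n, gRS x jv m * gRS (-x) m kv = if jv = kv then 1 else 0 := by
  have hexp : Real.exp x ≠ 1 := by
    simp [Real.exp_eq_one_iff, hx]
  rcases lt_trichotomy jv kv with hlt | heq | hgt
  · rw [if_neg hlt.ne]
    -- restrict to Icc jv kv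
    have hsub : Finset.Icc jv kv ⊆ Finset.range n := by
      intro m hm
      rw [Finset.mem_Icc] at hm
      exact Finset.mem_range.mpr (lt_of_le_of_lt hm.2 hk)
    rw [← Finset.sum_subset hsub]
    · rw [← Finset.Ico_add_one_right_eq_Icc, Finset.sum_Ico_eq_sum_range]
      obtain ⟨e, he⟩ : ∃ e, kv - jv = e + 1 := ⟨kv - jv - 1, by omega⟩
      have hrange : kv + 1 - jv = (e + 1) + 1 := by omega
      have hkv : kv = jv + e + 1 := by omega
      rw [hrange, Finset.sum_range_succ, Finset.sum_range_succ']
      have hlast : jv + (e + 1) = kv := by omega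
      set C : ℝ := (1 - Real.exp (-x)) * (1 - Real.exp x) *
        Real.exp ((1 - (e : ℝ)) * x / 2) with hC
      have hmid : ∀ i ∈ Finset.range e,
          gRS x jv (jv + (i + 1)) * gRS (-x) (jv + (i + 1)) kv = C * Real.exp x ^ i := by
        intro i hi
        rw [Finset.mem_range] at hi
        have c1 : jv ≠ jv + (i+1) := by omega
        have c2 : jv < jv + (i+1) := by omega
        have c3 : jv + (i+1) ≠ kv := by omega
        have c4 : jv + (i+1) < kv := by omega
        rw [gRS, gRS, if_neg c1, if_pos c2, if_neg c3, if_pos c4, hC]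
        rw [← Real.exp_nat_mul]
        rw [show ((1 - (e:ℝ)) * x / 2) = (1 - (e:ℝ)) * x / 2 from rfl]
        have comb : Real.exp ((((jv + (i+1) : ℕ) : ℝ) - (jv : ℝ)) * x / 2) *
            Real.exp (((kv : ℝ) - ((jv + (i+1) : ℕ) : ℝ)) * (-x) / 2) =
            Real.exp ((1 - (e : ℝ)) * x / 2) * Real.exp ((i : ℝ) * x) := by
          rw [← Real.exp_add, ← Real.exp_add]
          congr 1
          have : (kv : ℝ) = (jv : ℝ) + (e : ℝ) + 1 := by exact_mod_cast congrArg Nat.cast hkv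
          push_cast
          rw [this]; ring
        calc (1 - Real.exp (-x)) * Real.exp ((((jv + (i+1) : ℕ) : ℝ) - (jv : ℝ)) * x / 2) *
              ((1 - Real.exp (- -x)) * Real.exp (((kv : ℝ) - ((jv + (i+1) : ℕ) : ℝ)) * (-x) / 2))
            = (1 - Real.exp (-x)) * (1 - Real.exp (- -x)) *
              (Real.exp ((((jv + (i+1) : ℕ) : ℝ) - (jv : ℝ)) * x / 2) *
               Real.exp (((kv : ℝ) - ((jv + (i+1) : ℕ) : ℝ)) * (-x) / 2)) := by ring
          _ = (1 - Real.exp (-x)) * (1 - Real.exp x) *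
              (Real.exp ((1 - (e : ℝ)) * x / 2) * Real.exp ((i : ℝ) * x)) := by
              rw [comb, neg_neg]
          _ = _ := by ring
      rw [Finset.sum_congr rfl hmid, ← Finset.mul_sum, geom_sum_eq hexp, hlast]
      -- boundary terms
      have bj : gRS x jv jv = 1 := by simp [gRS]
      have bk : gRS (-x) kv kv = 1 := by simp [gRS]
      have bjk : gRS (-x) jv kv = (1 - Real.exp x) * Real.exp (((kv:ℝ) - (jv:ℝ)) * (-x) / 2) := by
        rw [gRS, if_neg hlt.ne, if_pos hlt, neg_neg]
      have bkj : gRS x jv kv = (1 - Real.exp (-x)) * Real.exp (((kv:ℝ) - (jv:ℝ)) * x / 2) := by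
        rw [gRS, if_neg hlt.ne, if_pos hlt]
      rw [add_zero] at *
      rw [bj, bk, bjk, bkj, hC]
      have hcast : (kv : ℝ) - (jv : ℝ) = (e : ℝ) + 1 := by
        have : (kv : ℝ) = (jv : ℝ) + (e : ℝ) + 1 := by exact_mod_cast congrArg Nat.cast hkv
        rw [this]; ring
      rw [hcast, ← Real.exp_nat_mul]
      have := key_id x (e : ℝ) hexp
      rw [show -(((e:ℝ)+1)*x)/2 = ((e:ℝ)+1) * (-x) / 2 by ring] at this
      rw [show ((e:ℝ)*x) = ((e:ℝ)*x) from rfl] at this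
      linarith [this]
    · intro m hmr hm
      rw [Finset.mem_Icc, not_and_or, not_le, not_le] at hm
      rcases hm with hm | hm
      · rw [gRS_of_lt hm, zero_mul]
      · rw [gRS_of_lt hm, mul_zero]
  · subst heq
    rw [if_pos rfl]
    rw [Finset.sum_eq_single_of_mem jv (Finset.mem_range.mpr hj)]
    · simp [gRS]
    · intro m _ hm
      rcases lt_or_gt_of_ne hm with h | h
      · rw [gRS_of_lt h, zero_mul]
      · have : gRS (-x) m jv = 0 := gRS_of_lt h (-x)
        rw [this, mul_zero]
  · rw [if_neg hgt.ne']
    apply Finset.sum_eq_zero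
    intro m _
    rcases lt_or_ge m jv with h | h
    · rw [gRS_of_lt h, zero_mul]
    · have : kv < m := lt_of_lt_of_le hgt h
      rw [gRS_of_lt this, mul_zero]

lemma nuRS_apply (n : ℕ) (x : ℝ) (j k : Fin n) : nuRS n x j k = gRS x j k := by
  simp only [nuRS, gRS, Matrix.of_apply, Fin.ext_iff, Fin.lt_def]

/-- ν(−x) = ν(x)⁻¹. -/
theorem nuRS_neg (n : ℕ) (x : ℝ) : nuRS n (-x) = (nuRS n x)⁻¹ := by
  rcases eq_or_ne x 0 with rfl | hx
  · have h1 : nuRS n (-0) = 1 := by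
      ext j k
      rcases eq_or_ne j k with rfl | hjk
      · simp [nuRS, Matrix.one_apply]
      · simp [nuRS, Matrix.one_apply, hjk]
    have h0 : nuRS n 0 = 1 := by rw [← neg_zero]; exact h1
    rw [h1, h0, inv_one]
  · have key : nuRS n x * nuRS n (-x) = 1 := by
      ext j k
      rw [Matrix.mul_apply, Matrix.one_apply]
      simp only [nuRS_apply]
      rw [Fin.sum_univ_eq_sum_range (fun m => gRS x j m * gRS (-x) m k)]
      rw [gRS_sum x hx n j k j.isLt k.isLt]
      simp [Fin.ext_iff]
    exact (Matrix.inv_eq_right_inv key).symm
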